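/- Assume additionally that a₀ and a₁ are twice continuously differentiable, and let M > 0. Then there exists a constant C > 0 (depending only on M, δ, a₀ and a₁) such that for all g, ĝ ∈ [−M, M] with |g − ĝ| < δ and all G, Ĝ ∈ ℝ² with G = 0 whenever g = t̄ and Ĝ = 0 whenever ĝ = t̄, one has |Z¹| + |Z²| ≤ C·( |g − ĝ|·|Ĝ| + |G − Ĝ| ) and |Z⁴| ≤ C·( |g − ĝ|·|Ĝ| + |G − Ĝ| )·(χ² + χ³), where |·| denotes the Euclidean norm on ℝ². -/

import Mathlib

open Real

private lemma derivBound (f : ℝ → ℝ) (hf : ContDiff ℝ 2 f) (R : ℝ) :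
    ∃ K : ℝ, 0 < K ∧ (∀ x ∈ Set.Icc (-R) R, |deriv f x| ≤ K) ∧
      ∀ x ∈ Set.Icc (-R) R, ∀ y ∈ Set.Icc (-R) R, |deriv f x - deriv f y| ≤ K * |x - y| := by
  have hdf : ContDiff ℝ 1 (deriv f) :=
    (contDiff_succ_iff_deriv.mp (by exact_mod_cast hf : ContDiff ℝ (1+1) f)).2.2
  have hddf : Continuous (deriv (deriv f)) :=
    ((contDiff_succ_iff_deriv.mp
      (by exact_mod_cast hdf : ContDiff ℝ (0+1) (deriv f))).2.2).continuous
  obtain ⟨K₀, hK₀⟩ := isCompact_Icc.exists_bound_of_continuousOn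
    (hdf.continuous.continuousOn (s := Set.Icc (-R) R))
  obtain ⟨K₁, hK₁⟩ := isCompact_Icc.exists_bound_of_continuousOn
    (hddf.continuousOn (s := Set.Icc (-R) R))
  refine ⟨|K₀| + |K₁| + 1, by positivity, ?_, ?_⟩
  · intro x hx
    have h := hK₀ x hx
    rw [Real.norm_eq_abs] at h
    linarith [le_abs_self K₀, abs_nonneg K₁]
  · intro x hx y hy
    have := Convex.norm_image_sub_le_of_norm_deriv_le (f := deriv f) (C := |K₀| + |K₁|)
      (fun z _ => (hdf.differentiable one_ne_zero).differentiableAt)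
      (fun z hz => le_trans (hK₁ z hz) (by linarith [le_abs_self K₁, abs_nonneg K₀]))
      (convex_Icc _ _) hy hx
    calc |deriv f x - deriv f y| ≤ (|K₀| + |K₁|) * |x - y| := by
          simpa [Real.norm_eq_abs] using this
      _ ≤ (|K₀| + |K₁| + 1) * |x - y| := by nlinarith [abs_nonneg (x - y)]

private lemma smul_diff_bound {E : Type*} [NormedAddCommGroup E] [NormedSpace ℝ E]
    (c d t K : ℝ) (G Gh : E) (_hK : 0 ≤ K) (_ht : 0 ≤ t) (hc : |c| ≤ K) (hcd : |c - d| ≤ K * t) :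
    ‖c • G - d • Gh‖ ≤ K * (t * ‖Gh‖ + ‖G - Gh‖) := by
  have h : c • G - d • Gh = c • (G - Gh) + (c - d) • Gh := by
    rw [smul_sub, sub_smul]; abel
  rw [h]
  calc ‖c • (G - Gh) + (c - d) • Gh‖ ≤ ‖c • (G - Gh)‖ + ‖(c - d) • Gh‖ := norm_add_le _ _
    _ = |c| * ‖G - Gh‖ + |c - d| * ‖Gh‖ := by rw [norm_smul, norm_smul, Real.norm_eq_abs, Real.norm_eq_abs]
    _ ≤ K * ‖G - Gh‖ + (K * t) * ‖Gh‖ := by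
        gcongr
    _ = K * (t * ‖Gh‖ + ‖G - Gh‖) := by ring

/-- Bounds on the components `Z¹, Z², Z⁴` of the nonsmooth gradient difference
decomposition: if `a₀, a₁` are `C²` and `M > 0`, then there is `C > 0` such that for all
`g, gh ∈ [−M, M]` with `|g − gh| < δ` and all `G, Gh ∈ ℝ²` with `G = 0` whenever `g = t̄`
and `Gh = 0` whenever `gh = t̄`, one has
`|Z¹| + |Z²| ≤ C(|g − gh| |Gh| + |G − Gh|)` and
`|Z⁴| ≤ C(|g − gh| |Gh| + |G − Gh|)(χ² + χ³)`. -/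
theorem stmt14 (δ tbar : ℝ) (hδ : 0 < δ) (a₀ a₁ : ℝ → ℝ)
    (h₀ : ContDiff ℝ 2 a₀) (h₁ : ContDiff ℝ 2 a₁) (hval : a₀ tbar = a₁ tbar)
    (M : ℝ) (hM : 0 < M) :
    ∃ C : ℝ, 0 < C ∧
      ∀ (g gh : ℝ) (G Gh : EuclideanSpace ℝ (Fin 2)),
        g ∈ Set.Icc (-M) M → gh ∈ Set.Icc (-M) M → |g - gh| < δ →
        (g = tbar → G = 0) → (gh = tbar → Gh = 0) →
        -- ‖Z¹‖ + ‖Z²‖ ≤ C (|g − gh| ‖Gh‖ + ‖G − Gh‖)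
        (‖(if gh < tbar ∧ g < tbar then (1:ℝ) else 0) • (deriv a₀ g • G - deriv a₀ gh • Gh)
            + (if tbar < gh ∧ tbar < g then (1:ℝ) else 0)
                • (deriv a₁ g • G - deriv a₁ gh • Gh)‖
          + ‖(if gh = tbar ∧ g ≠ tbar then (1:ℝ) else 0)
                • ((if g < tbar then deriv a₀ g else deriv a₁ g) • G)‖
          ≤ C * (|g - gh| * ‖Gh‖ + ‖G - Gh‖))
        ∧
        -- ‖Z⁴‖ ≤ C (|g − gh| ‖Gh‖ + ‖G − Gh‖) (χ² + χ³)
        (‖(if (tbar < gh ∧ gh < tbar + δ) ∧ (tbar - δ < g ∧ g ≤ tbar) then (1:ℝ) else 0)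
              • (deriv a₀ g • (G - Gh) + (deriv a₀ g - deriv a₀ tbar) • Gh
                  + (deriv a₁ tbar - deriv a₁ gh) • Gh)
            + (if (tbar - δ < gh ∧ gh < tbar) ∧ (tbar ≤ g ∧ g < tbar + δ) then (1:ℝ) else 0)
              • (deriv a₁ g • (G - Gh) + (deriv a₁ g - deriv a₁ tbar) • Gh
                  + (deriv a₀ tbar - deriv a₀ gh) • Gh)‖
          ≤ C * (|g - gh| * ‖Gh‖ + ‖G - Gh‖) *
              ((if (tbar < gh ∧ gh < tbar + δ) ∧ (tbar - δ < g ∧ g ≤ tbar) then (1:ℝ) else 0)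
                + (if (tbar - δ < gh ∧ gh < tbar) ∧ (tbar ≤ g ∧ g < tbar + δ)
                    then (1:ℝ) else 0))) := by
  set R : ℝ := |tbar| + M + δ with hR
  obtain ⟨K₀, hK₀pos, hK₀b, hK₀l⟩ := derivBound a₀ h₀ R
  obtain ⟨K₁, hK₁pos, hK₁b, hK₁l⟩ := derivBound a₁ h₁ R
  set K : ℝ := K₀ + K₁ with hKdef
  have hKpos : 0 < K := by positivity
  -- uniform bounds with constant K
  have hb₀ : ∀ x ∈ Set.Icc (-R) R, |deriv a₀ x| ≤ K := fun x hx =>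
    le_trans (hK₀b x hx) (by linarith)
  have hb₁ : ∀ x ∈ Set.Icc (-R) R, |deriv a₁ x| ≤ K := fun x hx =>
    le_trans (hK₁b x hx) (by linarith)
  have hl₀ : ∀ x ∈ Set.Icc (-R) R, ∀ y ∈ Set.Icc (-R) R,
      |deriv a₀ x - deriv a₀ y| ≤ K * |x - y| := by
    intro x hx y hy
    refine le_trans (hK₀l x hx y hy) ?_
    have := abs_nonneg (x - y); nlinarith
  have hl₁ : ∀ x ∈ Set.Icc (-R) R, ∀ y ∈ Set.Icc (-R) R,
      |deriv a₁ x - deriv a₁ y| ≤ K * |x - y| := by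
    intro x hx y hy
    refine le_trans (hK₁l x hx y hy) ?_
    have := abs_nonneg (x - y); nlinarith
  refine ⟨3 * K, by positivity, ?_⟩
  intro g gh G Gh hg hgh hclose hG0 hGh0
  obtain ⟨hg1, hg2⟩ := hg
  obtain ⟨hgh1, hgh2⟩ := hgh
  have habs : 0 ≤ |tbar| := abs_nonneg _
  have hgR : g ∈ Set.Icc (-R) R := ⟨by simp [hR]; linarith, by simp [hR]; linarith⟩
  have hghR : gh ∈ Set.Icc (-R) R := ⟨by simp [hR]; linarith, by simp [hR]; linarith⟩
  have htR : tbar ∈ Set.Icc (-R) R := by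
    constructor <;> simp [hR] <;> cases abs_cases tbar <;> linarith [abs_nonneg tbar]
  set D : ℝ := |g - gh| * ‖Gh‖ + ‖G - Gh‖ with hD
  have hDnn : 0 ≤ D := by positivity
  constructor
  · -- Z¹ and Z²
    have hA : ‖(if gh < tbar ∧ g < tbar then (1:ℝ) else 0) • (deriv a₀ g • G - deriv a₀ gh • Gh)
        + (if tbar < gh ∧ tbar < g then (1:ℝ) else 0)
            • (deriv a₁ g • G - deriv a₁ gh • Gh)‖ ≤ K * D := by
      by_cases h1 : gh < tbar ∧ g < tbar
      · have h2 : ¬ (tbar < gh ∧ tbar < g) := by rintro ⟨c, _⟩; linarith [h1.1]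
        simp only [if_pos h1, if_neg h2, one_smul, zero_smul, add_zero]
        exact smul_diff_bound _ _ _ _ G Gh hKpos.le (abs_nonneg _) (hb₀ g hgR)
          (hl₀ g hgR gh hghR)
      · by_cases h2 : tbar < gh ∧ tbar < g
        · simp only [if_neg h1, if_pos h2, one_smul, zero_smul, zero_add]
          exact smul_diff_bound _ _ _ _ G Gh hKpos.le (abs_nonneg _) (hb₁ g hgR)
            (hl₁ g hgR gh hghR)
        · simp only [if_neg h1, if_neg h2, zero_smul, add_zero, norm_zero]
          positivity
    have hB : ‖(if gh = tbar ∧ g ≠ tbar then (1:ℝ) else 0)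
        • ((if g < tbar then deriv a₀ g else deriv a₁ g) • G)‖ ≤ K * D := by
      by_cases h3 : gh = tbar ∧ g ≠ tbar
      · have hGh : Gh = 0 := hGh0 h3.1
        have hGeq : G - Gh = G := by simp [hGh]
        have hcb : |if g < tbar then deriv a₀ g else deriv a₁ g| ≤ K := by
          split_ifs
          · exact hb₀ g hgR
          · exact hb₁ g hgR
        simp only [if_pos h3, one_smul, norm_smul, Real.norm_eq_abs]
        have hGD : ‖G‖ ≤ D := by
          rw [hD, hGh]
          simp
        exact mul_le_mul hcb hGD (norm_nonneg _) hKpos.le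
      · simp only [if_neg h3, zero_smul, norm_zero]
        positivity
    calc _ ≤ K * D + K * D := add_le_add hA hB
      _ ≤ 3 * K * D := by nlinarith [mul_nonneg hKpos.le hDnn]
  · -- Z⁴
    set χ₂ : ℝ := if (tbar < gh ∧ gh < tbar + δ) ∧ (tbar - δ < g ∧ g ≤ tbar) then (1:ℝ) else 0
      with hχ₂
    set χ₃ : ℝ := if (tbar - δ < gh ∧ gh < tbar) ∧ (tbar ≤ g ∧ g < tbar + δ) then (1:ℝ) else 0
      with hχ₃
    have key : ∀ (c : ℝ) (key0 : |c| ≤ K) (b1 b2 : ℝ) (hb1 : |b1| ≤ K * |g - gh|)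
        (hb2 : |b2| ≤ K * |g - gh|),
        ‖c • (G - Gh) + b1 • Gh + b2 • Gh‖ ≤ 3 * K * D := by
      intro c hc b1 b2 hb1 hb2
      calc ‖c • (G - Gh) + b1 • Gh + b2 • Gh‖
          ≤ ‖c • (G - Gh)‖ + ‖b1 • Gh‖ + ‖b2 • Gh‖ := norm_add₃_le
        _ = |c| * ‖G - Gh‖ + |b1| * ‖Gh‖ + |b2| * ‖Gh‖ := by
            rw [norm_smul, norm_smul, norm_smul]; simp [Real.norm_eq_abs]
        _ ≤ K * ‖G - Gh‖ + (K * |g - gh|) * ‖Gh‖ + (K * |g - gh|) * ‖Gh‖ := by gcongr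
        _ ≤ 3 * K * D := by
            rw [hD]
            have h1 : 0 ≤ K * ‖G - Gh‖ := by positivity
            have h2 : 0 ≤ K * (|g - gh| * ‖Gh‖) := by positivity
            nlinarith
    by_cases h2 : (tbar < gh ∧ gh < tbar + δ) ∧ (tbar - δ < g ∧ g ≤ tbar)
    · have h3 : ¬ ((tbar - δ < gh ∧ gh < tbar) ∧ (tbar ≤ g ∧ g < tbar + δ)) := by
        rintro ⟨⟨_, c⟩, _⟩; linarith [h2.1.1]
      have hgt : |g - tbar| ≤ |g - gh| := by
        rw [abs_sub_comm g tbar, abs_of_nonneg (by linarith [h2.2.2] : (0:ℝ) ≤ tbar - g),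
          abs_sub_comm g gh, abs_of_nonneg (by linarith [h2.1.1, h2.2.2] : (0:ℝ) ≤ gh - g)]
        linarith [h2.1.1]
      have htgh : |tbar - gh| ≤ |g - gh| := by
        rw [abs_sub_comm tbar gh, abs_of_nonneg (by linarith [h2.1.1] : (0:ℝ) ≤ gh - tbar),
          abs_sub_comm g gh, abs_of_nonneg (by linarith [h2.1.1, h2.2.2] : (0:ℝ) ≤ gh - g)]
        linarith [h2.2.2]
      rw [hχ₂, hχ₃]
      simp only [if_pos h2, if_neg h3, one_smul, zero_smul, add_zero]
      rw [mul_one]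
      refine key _ (hb₀ g hgR) _ _ ?_ ?_
      · exact le_trans (hl₀ g hgR tbar htR) (mul_le_mul_of_nonneg_left hgt hKpos.le)
      · exact le_trans (hl₁ tbar htR gh hghR) (mul_le_mul_of_nonneg_left htgh hKpos.le)
    · by_cases h3 : (tbar - δ < gh ∧ gh < tbar) ∧ (tbar ≤ g ∧ g < tbar + δ)
      · have hgt : |g - tbar| ≤ |g - gh| := by
          rw [abs_of_nonneg (by linarith [h3.2.1] : (0:ℝ) ≤ g - tbar),
            abs_of_nonneg (by linarith [h3.1.2, h3.2.1] : (0:ℝ) ≤ g - gh)]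
          linarith [h3.1.2]
        have htgh : |tbar - gh| ≤ |g - gh| := by
          rw [abs_of_nonneg (by linarith [h3.1.2] : (0:ℝ) ≤ tbar - gh),
            abs_of_nonneg (by linarith [h3.1.2, h3.2.1] : (0:ℝ) ≤ g - gh)]
          linarith [h3.2.1]
        rw [hχ₂, hχ₃]
        simp only [if_neg h2, if_pos h3, one_smul, zero_smul, zero_add]
        rw [mul_one]
        refine key _ (hb₁ g hgR) _ _ ?_ ?_
        · exact le_trans (hl₁ g hgR tbar htR) (mul_le_mul_of_nonneg_left hgt hKpos.le)
        · exact le_trans (hl₀ tbar htR gh hghR) (mul_le_mul_of_nonneg_left htgh hKpos.le)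
      · rw [hχ₂, hχ₃]
        simp only [if_neg h2, if_neg h3, zero_smul, add_zero, norm_zero]
        simp
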